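/- Let A be a commutative ring, S ⊆ A a multiplicative set with 1 ∈ S, and Q a weakly S-prime ideal of A. Then the localized ideal S⁻¹Q is a weakly prime ideal of the localization S⁻¹A. -/

import Mathlib

/-- A fraction mk' x u lies in the map of Q whenever its numerator is in Q. -/
lemma aux_mk'_mem {A : Type*} [CommRing A] (S : Submonoid A) (Q : Ideal A)
    (x : A) (u : S) (hx : x ∈ Q) :
    IsLocalization.mk' (Localization S) x u ∈
      Ideal.map (algebraMap A (Localization S)) Q := by
  rw [IsLocalization.mk'_eq_mul_mk'_one]
  exact Ideal.mul_mem_right _ _ (Ideal.mem_map_of_mem _ hx)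

/-- If Q is weakly S-prime, then S⁻¹Q is weakly prime in S⁻¹A. -/
theorem stmt_15 {A : Type*} [CommRing A] (S : Submonoid A) (Q : Ideal A)
    (hdisj : (Q : Set A) ∩ (S : Set A) = ∅)
    (hQ : ∃ s ∈ S, ∀ x y : A, x * y ≠ 0 → x * y ∈ Q → s * x ∈ Q ∨ s * y ∈ Q) :
    Ideal.map (algebraMap A (Localization S)) Q ≠ ⊤ ∧
      ∀ a b : Localization S, a * b ≠ 0 →
        a * b ∈ Ideal.map (algebraMap A (Localization S)) Q →
        a ∈ Ideal.map (algebraMap A (Localization S)) Q ∨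
          b ∈ Ideal.map (algebraMap A (Localization S)) Q := by
  obtain ⟨s, hs, hsp⟩ := hQ
  have hdisj' : ∀ z, z ∈ Q → z ∈ S → False := by
    intro z hz hzS
    have : z ∈ (Q : Set A) ∩ (S : Set A) := ⟨hz, hzS⟩
    rw [hdisj] at this
    exact this
  constructor
  · intro htop
    have h1 : (1 : Localization S) ∈ Ideal.map (algebraMap A (Localization S)) Q := by
      rw [htop]; trivial
    rw [IsLocalization.mem_map_algebraMap_iff S] at h1
    obtain ⟨⟨⟨q, hq⟩, t⟩, he⟩ := h1
    simp only [one_mul] at he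
    obtain ⟨c, hc⟩ := (IsLocalization.eq_iff_exists S (Localization S)).mp he
    exact hdisj' (c * q) (Q.mul_mem_left _ hq) (hc ▸ S.mul_mem c.2 t.2)
  · intro a b hab0 hab
    obtain ⟨⟨x, u⟩, rfl⟩ := IsLocalization.mk'_surjective S a
    obtain ⟨⟨y, v⟩, rfl⟩ := IsLocalization.mk'_surjective S b
    rw [← IsLocalization.mk'_mul] at hab hab0
    rw [IsLocalization.mem_map_algebraMap_iff S] at hab
    obtain ⟨⟨⟨q, hq⟩, t⟩, he⟩ := hab
    rw [← IsLocalization.mk'_one (M := S) (Localization S) (t : A),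
      ← IsLocalization.mk'_one (M := S) (Localization S) q,
      ← IsLocalization.mk'_mul, IsLocalization.mk'_eq_iff_eq] at he
    obtain ⟨c, hc⟩ := (IsLocalization.eq_iff_exists S (Localization S)).mp he
    push_cast at hc
    have hc' : (c : A) * t * x * y = (c : A) * ((u : A) * (v : A) * q) := by
      linear_combination hc
    by_cases h0 : (c : A) * t * x * y = 0
    · exfalso
      apply hab0
      have hu : IsUnit (algebraMap A (Localization S) ((c : A) * t)) :=
        IsLocalization.map_units _ (⟨(c : A) * t, S.mul_mem c.2 t.2⟩ : S)
      have hz : algebraMap A (Localization S) ((c : A) * t) *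
          IsLocalization.mk' (Localization S) (x * y) (u * v) = 0 := by
        rw [← IsLocalization.mk'_one (M := S) (Localization S) ((c : A) * t),
          ← IsLocalization.mk'_mul]
        have h1 : (c : A) * t * (x * y) = 0 := by linear_combination h0
        rw [h1, IsLocalization.mk'_zero]
      exact hu.mul_left_cancel (by rw [mul_zero]; exact hz)
    · have hmem : (c : A) * t * x * y ∈ Q := by
        rw [hc']
        exact Q.mul_mem_left _ (Q.mul_mem_left _ hq)
      rcases hsp _ _ h0 hmem with h | h
      · left
        set w : S := ⟨s * (c : A) * t, S.mul_mem (S.mul_mem hs c.2) t.2⟩ with hw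
        have key := (IsLocalization.mk'_cancel (S := Localization S) x u w).symm
        show IsLocalization.mk' (Localization S) x u ∈ _
        rw [key]
        refine aux_mk'_mem S Q _ _ ?_
        have hxw : x * (w : A) = s * ((c : A) * t * x) := by rw [hw]; ring
        rw [hxw]
        exact h
      · right
        set w : S := ⟨s, hs⟩ with hw
        have key := (IsLocalization.mk'_cancel (S := Localization S) y v w).symm
        show IsLocalization.mk' (Localization S) y v ∈ _
        rw [key]
        refine aux_mk'_mem S Q _ _ ?_
        have hyw : y * (w : A) = s * y := by rw [hw]; ring
        rw [hyw]
        exact h
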